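/- The extreme points of the matrix jewel base at level 1, D_{jewel,k}(1) = {x ∈ ℝ^{k-1} : for all ε ∈ [k], Σ_{j=1}^{k-1} v_j(ε) x_j ≤ 1}, where v_j(ε) = -2/k + 2δ_{ε,j}, are exactly the points x_i = -(k/2) e_i for i ∈ [k-1] together with x_k = (k/2)(1,…,1). -/

import Mathlib

private noncomputable def lin (n : ℕ) (ε : Fin (n+2)) (x : Fin (n+1) → ℝ) : ℝ :=
  ∑ j : Fin (n+1), (-(2:ℝ)/((n:ℝ)+2) + if (ε : ℕ) = (j : ℕ) then 2 else 0) * x j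

private lemma lin_castSucc (n : ℕ) (j : Fin (n+1)) (x : Fin (n+1) → ℝ) :
    lin n j.castSucc x = -(2/((n:ℝ)+2)) * (∑ i, x i) + 2 * x j := by
  unfold lin
  simp only [Fin.coe_castSucc, add_mul, Finset.sum_add_distrib, ← Finset.mul_sum]
  congr 1
  · ring_nf
  · rw [Finset.sum_eq_single j]
    · simp
    · intro b _ hb
      have : ¬ (j:ℕ) = (b:ℕ) := fun h => hb (Fin.ext h.symm)
      simp [this]
    · simp
    
private lemma lin_last (n : ℕ) (x : Fin (n+1) → ℝ) :
    lin n (Fin.last (n+1)) x = -(2/((n:ℝ)+2)) * (∑ i, x i) := by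
  unfold lin
  simp only [Fin.val_last, add_mul, Finset.sum_add_distrib, ← Finset.mul_sum]
  have : ∀ j : Fin (n+1), (if (n+1 : ℕ) = (j : ℕ) then (2:ℝ) else 0) * x j = 0 := by
    intro j
    have : ¬ (n+1 : ℕ) = (j : ℕ) := by omega
    simp [this]
  rw [Finset.sum_congr rfl fun j _ => this j]
  simp
  ring_nf

private lemma lin_combo (n : ℕ) (ε : Fin (n+2)) (a b : ℝ) (y z : Fin (n+1) → ℝ) :
    lin n ε (a • y + b • z) = a * lin n ε y + b * lin n ε z := by
  unfold lin
  rw [Finset.mul_sum, Finset.mul_sum, ← Finset.sum_add_distrib]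
  refine Finset.sum_congr rfl fun j _ => ?_
  simp only [Pi.add_apply, Pi.smul_apply, smul_eq_mul]
  ring

private lemma lin_add (n : ℕ) (ε : Fin (n+2)) (x d : Fin (n+1) → ℝ) :
    lin n ε (x + d) = lin n ε x + lin n ε d := by
  unfold lin
  rw [← Finset.sum_add_distrib]
  refine Finset.sum_congr rfl fun j _ => ?_
  simp only [Pi.add_apply]
  ring

private lemma lin_sub (n : ℕ) (ε : Fin (n+2)) (x d : Fin (n+1) → ℝ) :
    lin n ε (x - d) = lin n ε x - lin n ε d := by
  unfold lin
  rw [← Finset.sum_sub_distrib]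
  refine Finset.sum_congr rfl fun j _ => ?_
  simp only [Pi.sub_apply]
  ring

private lemma uniq_all (n : ℕ) (x : Fin (n+1) → ℝ)
    (h : ∀ j : Fin (n+1), lin n (Fin.castSucc j) x = 1) :
    x = fun _ => ((n:ℝ)+2)/2 := by
  have hK : (0:ℝ) < (n:ℝ)+2 := by positivity
  have hc : ∀ j, x j = x 0 := by
    intro j
    have h1 := h j; have h2 := h 0
    rw [lin_castSucc] at h1 h2
    linarith
  have hσ : ∑ i, x i = ((n:ℝ)+1) * x 0 := by
    rw [Finset.sum_congr rfl fun j _ => hc j, Finset.sum_const, Finset.card_univ,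
      Fintype.card_fin, nsmul_eq_mul]
    push_cast
    ring
  have h0 := h 0
  rw [lin_castSucc, hσ] at h0
  have hx0 : x 0 = ((n:ℝ)+2)/2 := by
    field_simp at h0
    nlinarith [h0]
  funext j
  rw [hc j, hx0]

private lemma uniq_one (n : ℕ) (i : Fin (n+1)) (x : Fin (n+1) → ℝ)
    (hlast : lin n (Fin.last (n+1)) x = 1)
    (h : ∀ j, j ≠ i → lin n (Fin.castSucc j) x = 1) :
    x = fun j => if j = i then -(((n:ℝ)+2)/2) else 0 := by
  have hK : (0:ℝ) < (n:ℝ)+2 := by positivity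
  rw [lin_last] at hlast
  have hσ : ∑ j, x j = -(((n:ℝ)+2)/2) := by
    field_simp at hlast
    linarith
  have hz : ∀ j, j ≠ i → x j = 0 := by
    intro j hj
    have hj1 := h j hj
    rw [lin_castSucc] at hj1
    linarith [hlast]
  have hsum : ∑ j, x j = x i := Finset.sum_eq_single i (fun b _ hb => hz b hb) (by simp)
  have hxi : x i = -(((n:ℝ)+2)/2) := by rw [← hsum, hσ]
  funext j
  by_cases hj : j = i
  · subst hj; simp [hxi]
  · simp [hj, hz j hj]

private lemma lin_cast_all (n : ℕ) (j : Fin (n+1)) :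
    lin n (Fin.castSucc j) (fun _ => ((n:ℝ)+2)/2) = 1 := by
  have hK : ((n:ℝ)+2) ≠ 0 := by positivity
  rw [lin_castSucc, Finset.sum_const, Finset.card_univ, Fintype.card_fin, nsmul_eq_mul]
  push_cast
  field_simp
  ring

private lemma lin_last_all (n : ℕ) :
    lin n (Fin.last (n+1)) (fun _ => ((n:ℝ)+2)/2) = -((n:ℝ)+1) := by
  have hK : ((n:ℝ)+2) ≠ 0 := by positivity
  rw [lin_last, Finset.sum_const, Finset.card_univ, Fintype.card_fin, nsmul_eq_mul]
  push_cast
  field_simp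

private lemma sum_pi (n : ℕ) (i : Fin (n+1)) :
    ∑ j : Fin (n+1), (if j = i then -(((n:ℝ)+2)/2) else 0) = -(((n:ℝ)+2)/2) := by
  simp [Finset.sum_ite_eq']

private lemma lin_last_pi (n : ℕ) (i : Fin (n+1)) :
    lin n (Fin.last (n+1)) (fun j => if j = i then -(((n:ℝ)+2)/2) else 0) = 1 := by
  have hK : ((n:ℝ)+2) ≠ 0 := by positivity
  rw [lin_last, sum_pi]
  field_simp

private lemma lin_cast_pi (n : ℕ) (i j : Fin (n+1)) :
    lin n (Fin.castSucc j) (fun j => if j = i then -(((n:ℝ)+2)/2) else 0)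
      = 1 + 2 * (if j = i then -(((n:ℝ)+2)/2) else 0) := by
  have hK : ((n:ℝ)+2) ≠ 0 := by positivity
  rw [lin_castSucc, sum_pi]
  have : -(2/((n:ℝ)+2)) * -(((n:ℝ)+2)/2) = 1 := by field_simp
  rw [this]

private lemma main (n : ℕ) :
    Set.extremePoints ℝ {x : Fin (n+1) → ℝ | ∀ ε : Fin (n+2), lin n ε x ≤ 1}
      = (Set.range fun i : Fin (n+1) =>
          (fun j => if j = i then -(((n:ℝ)+2)/2) else 0 : Fin (n+1) → ℝ))
        ∪ {fun _ => ((n:ℝ)+2)/2} := by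
  have hK : (0:ℝ) < (n:ℝ)+2 := by positivity
  ext x
  simp only [Set.mem_union, Set.mem_range, Set.mem_singleton_iff]
  constructor
  · rintro ⟨hxS, hext⟩
    simp only [Set.mem_setOf_eq] at hxS
    have key : ∀ d : Fin (n+1) → ℝ, (∀ ε, lin n ε (x + d) ≤ 1) →
        (∀ ε, lin n ε (x - d) ≤ 1) → d = 0 := by
      intro d h1 h2
      have h3 := hext (x₁ := x + d) (x₂ := x - d) h1 h2
        ⟨1/2, 1/2, by norm_num, by norm_num, by norm_num, by module⟩
      have h4 := h3
      rwa [add_eq_left] at h4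
    by_cases hall : ∀ j : Fin (n+1), lin n (Fin.castSucc j) x = 1
    · exact Or.inr (uniq_all n x hall)
    · push_neg at hall
      obtain ⟨i, hi⟩ := hall
      have hi' : lin n (Fin.castSucc i) x < 1 := lt_of_le_of_ne (hxS _) hi
      have hlast : lin n (Fin.last (n+1)) x = 1 := by
        by_contra h
        have hl' : lin n (Fin.last (n+1)) x < 1 := lt_of_le_of_ne (hxS _) h
        set t : ℝ := min (1 - lin n (Fin.castSucc i) x) (1 - lin n (Fin.last (n+1)) x) / 2
          with ht
        have ht0 : 0 < t := by
          have := lt_min (show (0:ℝ) < 1 - lin n (Fin.castSucc i) x by linarith)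
            (show (0:ℝ) < 1 - lin n (Fin.last (n+1)) x by linarith)
          rw [ht]; linarith
        have hti : 2 * t ≤ 1 - lin n (Fin.castSucc i) x := by
          rw [ht]
          have := min_le_left (1 - lin n (Fin.castSucc i) x) (1 - lin n (Fin.last (n+1)) x)
          linarith
        have htl : 2 * t ≤ 1 - lin n (Fin.last (n+1)) x := by
          rw [ht]
          have := min_le_right (1 - lin n (Fin.castSucc i) x) (1 - lin n (Fin.last (n+1)) x)
          linarith
        set d : Fin (n+1) → ℝ := fun j => t * (1 + if j = i then 1 else 0) with hd
        have hsum : ∑ j, d j = t * ((n:ℝ)+2) := by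
          rw [hd, ← Finset.mul_sum, Finset.sum_add_distrib, Finset.sum_const,
            Finset.card_univ, Fintype.card_fin, Finset.sum_ite_eq',
            if_pos (Finset.mem_univ i), nsmul_eq_mul]
          push_cast
          ring
        have hKne : ((n:ℝ)+2) ≠ 0 := ne_of_gt hK
        have h2t : -(2/((n:ℝ)+2)) * (t * ((n:ℝ)+2)) = -(2*t) := by
          field_simp
        have hdc : ∀ j, lin n (Fin.castSucc j) d = if j = i then 2*t else 0 := by
          intro j
          rw [lin_castSucc, hsum, h2t]
          simp only [hd]
          by_cases hji : j = i
          · rw [if_pos hji, if_pos hji]; ring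
          · rw [if_neg hji, if_neg hji]; ring
        have hdl : lin n (Fin.last (n+1)) d = -(2*t) := by
          rw [lin_last, hsum, h2t]
        have hd1 : ∀ ε, lin n ε (x + d) ≤ 1 := by
          intro ε
          rw [lin_add]
          induction ε using Fin.lastCases with
          | last => rw [hdl]; linarith
          | cast j =>
            rw [hdc j]
            by_cases hji : j = i
            · subst hji; rw [if_pos rfl]; linarith
            · rw [if_neg hji]; linarith [hxS (Fin.castSucc j)]
        have hd2 : ∀ ε, lin n ε (x - d) ≤ 1 := by
          intro ε
          rw [lin_sub]
          induction ε using Fin.lastCases with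
          | last => rw [hdl]; linarith
          | cast j =>
            rw [hdc j]
            by_cases hji : j = i
            · subst hji; rw [if_pos rfl]; linarith
            · rw [if_neg hji]; linarith [hxS (Fin.castSucc j)]
        have hd0 := key d hd1 hd2
        have h3 := congrFun hd0 i
        simp [hd] at h3
        linarith
      have hoth : ∀ j, j ≠ i → lin n (Fin.castSucc j) x = 1 := by
        intro j hji
        by_contra h
        have hj' : lin n (Fin.castSucc j) x < 1 := lt_of_le_of_ne (hxS _) h
        set t : ℝ := min (1 - lin n (Fin.castSucc i) x) (1 - lin n (Fin.castSucc j) x) / 2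
          with ht
        have ht0 : 0 < t := by
          have := lt_min (show (0:ℝ) < 1 - lin n (Fin.castSucc i) x by linarith)
            (show (0:ℝ) < 1 - lin n (Fin.castSucc j) x by linarith)
          rw [ht]; linarith
        have hti : 2 * t ≤ 1 - lin n (Fin.castSucc i) x := by
          rw [ht]
          have := min_le_left (1 - lin n (Fin.castSucc i) x) (1 - lin n (Fin.castSucc j) x)
          linarith
        have htj : 2 * t ≤ 1 - lin n (Fin.castSucc j) x := by
          rw [ht]
          have := min_le_right (1 - lin n (Fin.castSucc i) x) (1 - lin n (Fin.castSucc j) x)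
          linarith
        set d : Fin (n+1) → ℝ := fun m => t * ((if m = i then 1 else 0) - (if m = j then 1 else 0))
          with hd
        have hsum : ∑ m, d m = 0 := by
          rw [hd, ← Finset.mul_sum, Finset.sum_sub_distrib, Finset.sum_ite_eq',
            Finset.sum_ite_eq']
          simp
        have hdc : ∀ m, lin n (Fin.castSucc m) d
            = 2 * (t * ((if m = i then 1 else 0) - (if m = j then 1 else 0))) := by
          intro m
          rw [lin_castSucc, hsum]
          simp only [hd]
          ring
        have hdl : lin n (Fin.last (n+1)) d = 0 := by
          rw [lin_last, hsum]
          ring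
        have hd1 : ∀ ε, lin n ε (x + d) ≤ 1 := by
          intro ε
          rw [lin_add]
          induction ε using Fin.lastCases with
          | last => rw [hdl]; linarith [hxS (Fin.last (n+1))]
          | cast m =>
            rw [hdc m]
            by_cases hmi : m = i
            · rw [hmi, if_pos rfl, if_neg (show i ≠ j from fun hh => hji hh.symm)]
              linarith
            · by_cases hmj : m = j
              · rw [hmj, if_neg (show j ≠ i from hji), if_pos rfl]
                linarith
              · rw [if_neg hmi, if_neg hmj]
                have := hxS (Fin.castSucc m)
                linarith
        have hd2 : ∀ ε, lin n ε (x - d) ≤ 1 := by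
          intro ε
          rw [lin_sub]
          induction ε using Fin.lastCases with
          | last => rw [hdl]; linarith [hxS (Fin.last (n+1))]
          | cast m =>
            rw [hdc m]
            by_cases hmi : m = i
            · rw [hmi, if_pos rfl, if_neg (show i ≠ j from fun hh => hji hh.symm)]
              linarith
            · by_cases hmj : m = j
              · rw [hmj, if_neg (show j ≠ i from hji), if_pos rfl]
                linarith
              · rw [if_neg hmi, if_neg hmj]
                have := hxS (Fin.castSucc m)
                linarith
        have hd0 := key d hd1 hd2
        have h3 := congrFun hd0 i
        simp [hd, show i ≠ j from fun hh => hji hh.symm] at h3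
        linarith
      exact Or.inl ⟨i, (uniq_one n i x hlast hoth).symm⟩
  · rintro (⟨i, rfl⟩ | rfl)
    · constructor
      · intro ε
        induction ε using Fin.lastCases with
        | last => rw [lin_last_pi]
        | cast j =>
          rw [lin_cast_pi]
          by_cases hji : j = i
          · simp only [if_pos hji]; linarith
          · simp only [if_neg hji]; linarith
      · rintro y hy z hz ⟨a, b, ha, hb, hab, habx⟩
        have hy' : ∀ ε, lin n ε y ≤ 1 := hy
        have hz' : ∀ ε, lin n ε z ≤ 1 := hz
        have combo : ∀ ε : Fin (n+2), a * lin n ε y + b * lin n ε z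
            = lin n ε (fun j => if j = i then -(((n:ℝ)+2)/2) else 0) := by
          intro ε
          rw [← lin_combo, habx]
        have tight : ∀ ε : Fin (n+2),
            lin n ε (fun j => if j = i then -(((n:ℝ)+2)/2) else 0) = 1 →
            lin n ε y = 1 ∧ lin n ε z = 1 := by
          intro ε h1
          have h2 := combo ε
          rw [h1] at h2
          constructor <;> nlinarith [hy' ε, hz' ε]
        have hcy : ∀ j, j ≠ i → lin n (Fin.castSucc j) y = 1 := by
          intro j hj
          refine (tight _ ?_).1
          rw [lin_cast_pi]
          simp [hj]
        have hcz : ∀ j, j ≠ i → lin n (Fin.castSucc j) z = 1 := by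
          intro j hj
          refine (tight _ ?_).2
          rw [lin_cast_pi]
          simp [hj]
        exact uniq_one n i y ((tight _ (lin_last_pi n i)).1) hcy
    · constructor
      · intro ε
        induction ε using Fin.lastCases with
        | last => rw [lin_last_all]; linarith
        | cast j => rw [lin_cast_all]
      · rintro y hy z hz ⟨a, b, ha, hb, hab, habx⟩
        have hy' : ∀ ε, lin n ε y ≤ 1 := hy
        have hz' : ∀ ε, lin n ε z ≤ 1 := hz
        have combo : ∀ ε : Fin (n+2), a * lin n ε y + b * lin n ε z
            = lin n ε (fun _ => ((n:ℝ)+2)/2) := by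
          intro ε
          rw [← lin_combo, habx]
        have tight : ∀ ε : Fin (n+2),
            lin n ε (fun _ => ((n:ℝ)+2)/2) = 1 →
            lin n ε y = 1 ∧ lin n ε z = 1 := by
          intro ε h1
          have h2 := combo ε
          rw [h1] at h2
          constructor <;> nlinarith [hy' ε, hz' ε]
        exact uniq_all n y (fun j => (tight _ (lin_cast_all n j)).1)

/-- The extreme points of the matrix jewel base at level 1,
`D_{jewel,k}(1) = {x ∈ ℝ^{k-1} : ∀ ε ∈ [k], ∑_j v_j(ε) x_j ≤ 1}` with
`v_j(ε) = -2/k + 2δ_{ε,j}`, are exactly `-(k/2)iₑ` for `i ∈ [k-1]` together with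
`(k/2)(1,…,1)`. -/
theorem stmt_3 (k : ℕ) (hk : 2 ≤ k) :
    Set.extremePoints ℝ
        {x : Fin (k - 1) → ℝ |
          ∀ ε : Fin k, ∑ j : Fin (k - 1), (-(2 : ℝ) / k + if (ε : ℕ) = (j : ℕ) then 2 else 0) * x j ≤ 1}
      = (Set.range fun i : Fin (k - 1) =>
          (fun j => if j = i then -((k : ℝ) / 2) else 0 : Fin (k - 1) → ℝ))
        ∪ {fun _ => (k : ℝ) / 2} := by
  obtain ⟨n, rfl⟩ : ∃ n, k = n + 2 := ⟨k - 2, by omega⟩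
  have hcast : ((n + 2 : ℕ) : ℝ) = (n : ℝ) + 2 := by push_cast; ring
  simp only [hcast]
  exact main n
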